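/- Let G be a finite simple graph on a nonempty vertex set V that is vertex-transitive, and let J₀ ∈ ℝ^V be the vector with every entry equal to 1/√|V|. Then the infimum, over all H-feasible pairs (v, M) for G, of Σ_α (J₀)_α v_α, is equal to −√(ϑ(G)). In particular, the worst case over unit-norm J of the graph semi-definite program for H is achieved with J proportional to the all-ones vector. -/

import Mathlib

open scoped BigOperators

/-- A theta-feasible matrix for `G`: real symmetric PSD with trace 1 and vanishing on edges. -/
def ThetaFeasible {V : Type*} [Fintype V] (G : SimpleGraph V) (M : Matrix V V ℝ) : Prop :=
  M.IsSymm ∧ M.PosSemidef ∧ M.trace = 1 ∧ ∀ a b, G.Adj a b → M a b = 0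

/-- The Lovász theta function of `G`. -/
noncomputable def lovaszTheta {V : Type*} [Fintype V] (G : SimpleGraph V) : ℝ :=
  sSup {x : ℝ | ∃ M : Matrix V V ℝ, ThetaFeasible G M ∧ x = ∑ a, ∑ b, M a b}

/-- An H²-feasible matrix for `G`: real symmetric PSD, unit diagonal, vanishing on edges. -/
def H2Feasible {V : Type*} [Fintype V] (G : SimpleGraph V) (M : Matrix V V ℝ) : Prop :=
  M.IsSymm ∧ M.PosSemidef ∧ (∀ a, M a a = 1) ∧ ∀ a b, G.Adj a b → M a b = 0

/-- The block matrix N = [[1, vᵀ],[v, M]]. -/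
def blockN {V : Type*} [Fintype V] [DecidableEq V] (v : V → ℝ) (M : Matrix V V ℝ) :
    Matrix (Unit ⊕ V) (Unit ⊕ V) ℝ :=
  Matrix.fromBlocks 1 (Matrix.of fun _ b => v b) (Matrix.of fun a _ => v a) M

/-- An H-feasible pair for `G`. -/
def HFeasible {V : Type*} [Fintype V] [DecidableEq V] (G : SimpleGraph V)
    (v : V → ℝ) (M : Matrix V V ℝ) : Prop :=
  H2Feasible G M ∧ (blockN v M).PosSemidef

/-- `G` is vertex-transitive. -/
def VertexTransitive {V : Type*} (G : SimpleGraph V) : Prop :=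
  ∀ u w : V, ∃ g : G ≃g G, g u = w

open scoped BigOperators
open Matrix

section Helpers
variable {V : Type*} [Fintype V] [DecidableEq V]

lemma psd_smul {M : Matrix V V ℝ} (hM : M.PosSemidef) {c : ℝ} (hc : 0 ≤ c) :
    (c • M).PosSemidef := by
  refine .of_dotProduct_mulVec_nonneg ?_ fun x => ?_
  · unfold Matrix.IsHermitian
    rw [conjTranspose_smul, hM.1]
    simp
  · rw [smul_mulVec, dotProduct_smul]
    exact mul_nonneg hc (hM.dotProduct_mulVec_nonneg x)

lemma psd_sum {ι : Type*} (s : Finset ι) (f : ι → Matrix V V ℝ)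
    (h : ∀ i ∈ s, (f i).PosSemidef) : (∑ i ∈ s, f i).PosSemidef := by
  classical
  induction s using Finset.induction with
  | empty => simpa using Matrix.PosSemidef.zero
  | insert _ _ hx ih =>
    rw [Finset.sum_insert hx]
    exact (h _ (Finset.mem_insert_self _ _)).add
      (ih fun i hi => h i (Finset.mem_insert_of_mem hi))

lemma quad_ones {M : Matrix V V ℝ} :
    (fun _ : V => (1:ℝ)) ⬝ᵥ M *ᵥ (fun _ : V => (1:ℝ)) = ∑ a, ∑ b, M a b := by
  simp [dotProduct, Matrix.mulVec]

lemma sum_sum_nonneg_of_psd {M : Matrix V V ℝ} (hM : M.PosSemidef) :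
    0 ≤ ∑ a, ∑ b, M a b := by
  simpa [quad_ones] using hM.dotProduct_mulVec_nonneg (fun _ => (1:ℝ))

lemma blockN_psd_iff (v : V → ℝ) (M : Matrix V V ℝ) :
    (blockN v M).PosSemidef ↔ (M - Matrix.of fun a b => v a * v b).PosSemidef := by
  have h1 : (Matrix.of fun (a:V) (_:Unit) => v a) = (Matrix.of fun (_:Unit) (b:V) => v b)ᴴ := by
    ext a b; simp [Matrix.conjTranspose_apply]
  haveI : Invertible (1 : Matrix Unit Unit ℝ) := invertibleOne
  rw [blockN, h1, Matrix.PosDef.fromBlocks₁₁ _ _ Matrix.PosDef.one]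
  have h2 : (Matrix.of fun (_:Unit) (b:V) => v b)ᴴ * (1 : Matrix Unit Unit ℝ)⁻¹ *
      (Matrix.of fun (_:Unit) (b:V) => v b) = Matrix.of fun a b => v a * v b := by
    ext a b; simp [Matrix.mul_apply]
  rw [h2]

/-- entrywise bound for PSD matrices -/
lemma psd_entry_bound {M : Matrix V V ℝ} (hM : M.PosSemidef) (hs : M.IsSymm) (a b : V) :
    2 * M a b ≤ M a a + M b b := by
  have h := hM.dotProduct_mulVec_nonneg (Pi.single a 1 - Pi.single b 1)
  have hba : M b a = M a b := by
    conv_lhs => rw [← hs]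
    rfl
  simp only [star_trivial, Matrix.mulVec_sub, Matrix.mulVec_single, dotProduct_sub,
    sub_dotProduct, single_dotProduct] at h
  simp only [mul_one, one_mul, MulOpposite.op_one, one_smul, Matrix.col_apply] at h
  nlinarith [h]

end Helpers
section Construction
open Matrix
variable {V : Type*} [Fintype V] [DecidableEq V] [Nonempty V]

lemma isHermitian_of_isSymm {M : Matrix V V ℝ} (h : M.IsSymm) : M.IsHermitian := by
  rw [Matrix.IsHermitian, Matrix.conjTranspose_eq_transpose_of_trivial]; exact h

lemma construction (G : SimpleGraph V) (hG : VertexTransitive G)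
    {S : ℝ} {M' : Matrix V V ℝ} (hM' : ThetaFeasible G M')
    (hS : S = ∑ a, ∑ b, M' a b) :
    ∃ (v : V → ℝ) (M : Matrix V V ℝ), HFeasible G v M ∧
      (∀ a, v a = -Real.sqrt (S / (Fintype.card V : ℝ))) := by
  classical
  obtain ⟨hsym, hpsd, htr, hedge⟩ := hM'
  set n : ℝ := (Fintype.card V : ℝ) with hn
  have hn0 : 0 < n := by
    simp only [hn]; exact_mod_cast Fintype.card_pos
  have hS0 : 0 ≤ S := by rw [hS]; exact sum_sum_nonneg_of_psd hpsd
  haveI : Finite (G ≃g G) := Finite.of_injective (fun g => g.toEquiv)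
    (fun a b h => by cases a; cases b; simpa using h)
  haveI : Fintype (G ≃g G) := Fintype.ofFinite _
  haveI : Nonempty (G ≃g G) := ⟨RelIso.refl _⟩
  set k : ℝ := (Fintype.card (G ≃g G) : ℝ) with hkdef
  have hk : 0 < k := by simp only [hkdef]; exact_mod_cast Fintype.card_pos
  set M₂ : Matrix V V ℝ := k⁻¹ • ∑ g : G ≃g G, M'.submatrix g g with hM₂
  have hent : ∀ a b, M₂ a b = k⁻¹ * ∑ g : G ≃g G, M' (g a) (g b) := by
    intro a b
    simp [hM₂, Matrix.sum_apply]
  -- PSD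
  have hpsd₂ : M₂.PosSemidef := by
    rw [hM₂]
    refine psd_smul (psd_sum Finset.univ (fun g : G ≃g G => M'.submatrix g g)
      (fun g _ => hpsd.submatrix ⇑g)) (inv_nonneg.mpr hk.le)
  -- symmetric
  have hsym₂ : M₂.IsSymm := by
    show M₂ᵀ = M₂
    simp only [hM₂, Matrix.transpose_smul, Matrix.transpose_sum, Matrix.transpose_submatrix]
    rw [show M'ᵀ = M' from hsym]
  -- invariance
  have hinv : ∀ (h : G ≃g G) (x y : V), M₂ (h x) (h y) = M₂ x y := by
    intro h x y
    rw [hent, hent]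
    congr 1
    have hb : Function.Bijective (fun g : G ≃g G => h.trans g) := by
      refine Function.bijective_iff_has_inverse.mpr ⟨fun g => h.symm.trans g, fun g => ?_, fun g => ?_⟩
      · ext z; simp
      · ext z; simp
    exact Fintype.sum_bijective _ hb (fun g => M' (g (h x)) (g (h y)))
      (fun g => M' (g x) (g y)) (fun g => rfl)
  -- trace
  have htrdiag : ∑ a, M' a a = 1 := by simpa [Matrix.trace, Matrix.diag] using htr
  have hdiagsum : ∑ a, M₂ a a = 1 := by
    have h1 : ∀ g : G ≃g G, ∑ a, M' (g a) (g a) = 1 := by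
      intro g
      rw [← htrdiag]
      exact Equiv.sum_comp g.toEquiv (fun a => M' a a)
    calc ∑ a, M₂ a a = ∑ a, k⁻¹ * ∑ g : G ≃g G, M' (g a) (g a) := by
          exact Finset.sum_congr rfl fun a _ => hent a a
      _ = k⁻¹ * ∑ g : G ≃g G, ∑ a, M' (g a) (g a) := by
          rw [← Finset.mul_sum, Finset.sum_comm]
      _ = 1 := by
          simp only [h1, Finset.sum_const, Finset.card_univ, nsmul_eq_mul, mul_one]
          rw [← hkdef]
          field_simp
  -- edges vanish
  have hedge₂ : ∀ a b, G.Adj a b → M₂ a b = 0 := by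
    intro a b hab
    rw [hent]
    have : ∀ g : G ≃g G, M' (g a) (g b) = 0 := fun g => hedge _ _ (g.map_rel_iff.mpr hab)
    simp [this]
  -- constant diagonal
  have hdiag : ∀ a, M₂ a a = n⁻¹ := by
    have hcon : ∀ a b : V, M₂ a a = M₂ b b := by
      intro a b
      obtain ⟨h, hh⟩ := hG a b
      rw [← hh, hinv h a a]
    intro a
    have h2 : ∑ b, M₂ b b = n * M₂ a a := by
      rw [show (∑ b, M₂ b b) = ∑ _b : V, M₂ a a from
        Finset.sum_congr rfl fun b _ => hcon b a]
      simp [hn, Finset.sum_const, mul_comm]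
    rw [hdiagsum] at h2
    field_simp [hn0.ne'] at h2 ⊢
    linarith
  -- total sum is S
  have hsum₂ : ∑ a, ∑ b, M₂ a b = S := by
    have h2 : ∀ g : G ≃g G, ∑ a, ∑ b, M' (g a) (g b) = S := by
      intro g
      have h3 : ∀ a, ∑ b, M' (g a) (g b) = ∑ b, M' (g a) b := fun a =>
        Equiv.sum_comp g.toEquiv (fun b => M' (g a) b)
      rw [Finset.sum_congr rfl fun a _ => h3 a, hS]
      exact Equiv.sum_comp g.toEquiv (fun a => ∑ b, M' a b)
    calc ∑ a, ∑ b, M₂ a b = ∑ a, ∑ b, (k⁻¹ * ∑ g : G ≃g G, M' (g a) (g b)) := by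
          exact Finset.sum_congr rfl fun a _ => Finset.sum_congr rfl fun b _ => hent a b
      _ = k⁻¹ * ∑ a, ∑ b, ∑ g : G ≃g G, M' (g a) (g b) := by
          simp only [Finset.mul_sum]
      _ = k⁻¹ * ∑ g : G ≃g G, ∑ a, ∑ b, M' (g a) (g b) := by
          congr 1
          calc ∑ a, ∑ b, ∑ g : G ≃g G, M' (g a) (g b)
              = ∑ a, ∑ g : G ≃g G, ∑ b, M' (g a) (g b) :=
                Finset.sum_congr rfl fun a _ => Finset.sum_comm
            _ = ∑ g : G ≃g G, ∑ a, ∑ b, M' (g a) (g b) := Finset.sum_comm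
      _ = S := by
          simp only [h2, Finset.sum_const, Finset.card_univ, nsmul_eq_mul, ← hkdef]
          field_simp
  -- constant row sums
  have hrow : ∀ a, ∑ b, M₂ a b = S / n := by
    have hrowc : ∀ a b : V, ∑ y, M₂ a y = ∑ y, M₂ b y := by
      intro a b
      obtain ⟨h, hh⟩ := hG a b
      rw [← hh]
      calc ∑ y, M₂ a y = ∑ y, M₂ (h a) (h y) := by
            exact Finset.sum_congr rfl fun y _ => (hinv h a y).symm
        _ = ∑ y, M₂ (h a) y := Equiv.sum_comp h.toEquiv (fun y => M₂ (h a) y)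
    intro a
    have h2 : ∑ a', ∑ b, M₂ a' b = n * ∑ b, M₂ a b := by
      rw [show (∑ a', ∑ b, M₂ a' b) = ∑ _a' : V, ∑ b, M₂ a b from
        Finset.sum_congr rfl fun a' _ => hrowc a' a]
      simp [hn, Finset.sum_const, mul_comm]
    rw [hsum₂] at h2
    field_simp [hn0.ne']
    linarith
  -- the final pair
  set M : Matrix V V ℝ := n • M₂ with hM
  set v : V → ℝ := fun _ => -Real.sqrt (S / n) with hv
  have hSn : 0 ≤ S / n := div_nonneg hS0 hn0.le
  have hH2 : H2Feasible G M := by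
    refine ⟨?_, psd_smul hpsd₂ hn0.le, fun a => ?_, fun a b hab => ?_⟩
    · show Mᵀ = M
      rw [hM, Matrix.transpose_smul, hsym₂]
    · rw [hM]
      simp only [Matrix.smul_apply, smul_eq_mul, hdiag a]
      field_simp
    · rw [hM]
      simp [Matrix.smul_apply, hedge₂ a b hab]
  have hrowM : ∀ a, ∑ b, M a b = S := by
    intro a
    rw [hM]
    simp only [Matrix.smul_apply, smul_eq_mul, ← Finset.mul_sum, hrow a]
    field_simp
  -- Schur complement positivity
  have hschur : (M - Matrix.of fun a b => v a * v b).PosSemidef := by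
    have hvv : ∀ a b : V, v a * v b = S / n := by
      intro a b
      simp only [hv, neg_mul_neg]
      exact Real.mul_self_sqrt hSn
    refine .of_dotProduct_mulVec_nonneg (isHermitian_of_isSymm ?_) fun x => ?_
    · have hMs : Mᵀ = M := by rw [hM, Matrix.transpose_smul, hsym₂]
      show _ = _
      rw [Matrix.transpose_sub, hMs]
      have hCs : (Matrix.of fun a b => v a * v b)ᵀ = (Matrix.of fun a b => v a * v b) := by
        ext a b
        simp only [Matrix.transpose_apply, Matrix.of_apply, hvv]
      rw [hCs]
    · simp only [star_trivial]
      set t : ℝ := ∑ a, x a with ht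
      set c : ℝ := t / n with hc
      set y : V → ℝ := x - c • (fun _ => (1:ℝ)) with hy
      have hM1 : M *ᵥ (fun _ => (1:ℝ)) = fun _ => S := by
        ext a
        simp [Matrix.mulVec, dotProduct, hrowM a]
      have hdS : ∀ z : V → ℝ, z ⬝ᵥ (fun _ => S) = (∑ a, z a) * S := by
        intro z
        simp [dotProduct, ← Finset.sum_mul]
      have hsum1 : ∑ _a : V, (1:ℝ) = n := by simp [hn]
      have honeM : (fun _ => (1:ℝ)) ⬝ᵥ M *ᵥ x = t * S := by
        rw [Matrix.dotProduct_mulVec]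
        have h4 : (fun _ => (1:ℝ)) ᵥ* M = fun _ => S := by
          rw [show M = Mᵀ from hH2.1.symm, Matrix.vecMul_transpose, hM1]
        rw [h4]
        simp only [dotProduct]
        rw [← Finset.mul_sum, ← ht, mul_comm]
      have eB' : x ⬝ᵥ M *ᵥ (fun _ => (1:ℝ)) = t * S := by rw [hM1, hdS x, ← ht]
      have eD : (fun _ => (1:ℝ)) ⬝ᵥ M *ᵥ (fun _ => (1:ℝ)) = n * S := by
        rw [hM1, hdS, hsum1]
      have ebil : y ⬝ᵥ M *ᵥ y = x ⬝ᵥ M *ᵥ x - c * (x ⬝ᵥ M *ᵥ (fun _ => (1:ℝ)))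
          - c * ((fun _ => (1:ℝ)) ⬝ᵥ M *ᵥ x)
          + c * (c * ((fun _ => (1:ℝ)) ⬝ᵥ M *ᵥ (fun _ => (1:ℝ)))) := by
        rw [hy]
        simp only [sub_dotProduct, dotProduct_sub, Matrix.mulVec_sub,
          Matrix.mulVec_smul, smul_dotProduct, dotProduct_smul, smul_eq_mul]
        ring
      have hCx : x ⬝ᵥ (Matrix.of fun a b => v a * v b) *ᵥ x = (S / n) * t ^ 2 := by
        have h5 : (Matrix.of fun a b => v a * v b) *ᵥ x = fun _ => (S / n) * t := by
          ext a
          simp only [Matrix.mulVec, dotProduct, Matrix.of_apply]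
          have h6 : ∀ b, v a * v b * x b = (S / n) * x b := fun b => by rw [hvv a b]
          rw [Finset.sum_congr rfl fun b _ => h6 b, ← Finset.mul_sum, ← ht]
        rw [h5]
        simp only [dotProduct]
        rw [← Finset.sum_mul, ← ht]
        ring
      have hy0 : 0 ≤ y ⬝ᵥ M *ᵥ y := by
        have := (psd_smul hpsd₂ hn0.le).dotProduct_mulVec_nonneg y
        simpa [hM] using this
      rw [ebil, eB', honeM, eD] at hy0
      have key : c * (t * S) + c * (t * S) - c * (c * (n * S)) = S / n * t ^ 2 := by
        rw [hc]
        field_simp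
        ring
      rw [Matrix.sub_mulVec, dotProduct_sub, hCx]
      linarith
  refine ⟨v, M, ⟨hH2, (blockN_psd_iff v M).mpr hschur⟩, fun a => ?_⟩
  rw [hv, hn]
end Construction
section Main
open Matrix
variable {V : Type*} [Fintype V] [DecidableEq V] [Nonempty V]

lemma hfeasible_lower (G : SimpleGraph V)
    (hbdd : BddAbove {x : ℝ | ∃ M' : Matrix V V ℝ,
      ThetaFeasible G M' ∧ x = ∑ a, ∑ b, M' a b})
    {v : V → ℝ} {M : Matrix V V ℝ} (h : HFeasible G v M) :
    -(Real.sqrt (Fintype.card V) * Real.sqrt (lovaszTheta G)) ≤ ∑ a, v a := by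
  obtain ⟨⟨hsym, hpsd, hdiag, hedge⟩, hN⟩ := h
  set n : ℝ := (Fintype.card V : ℝ) with hn
  have hn0 : 0 < n := by simp only [hn]; exact_mod_cast Fintype.card_pos
  have hP : (M - Matrix.of fun a b => v a * v b).PosSemidef := (blockN_psd_iff v M).mp hN
  have h1 : 0 ≤ (∑ a, ∑ b, M a b) - ∑ a, ∑ b, v a * v b := by
    have h0 := sum_sum_nonneg_of_psd hP
    simpa [Matrix.sub_apply, Finset.sum_sub_distrib] using h0
  have h2 : (∑ a, v a) ^ 2 ≤ ∑ a, ∑ b, M a b := by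
    have hq : (∑ a, v a) ^ 2 = ∑ a, ∑ b, v a * v b := by
      rw [sq, Finset.sum_mul_sum]
    linarith
  have htrM : ∑ a, M a a = n := by
    simp [hdiag, hn, Finset.sum_const, Finset.card_univ]
  have hmem : n⁻¹ * (∑ a, ∑ b, M a b) ∈ {x : ℝ | ∃ M' : Matrix V V ℝ,
      ThetaFeasible G M' ∧ x = ∑ a, ∑ b, M' a b} := by
    refine ⟨n⁻¹ • M, ⟨?_, psd_smul hpsd (inv_nonneg.mpr hn0.le), ?_, fun a b hab => ?_⟩, ?_⟩
    · show _ = _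
      rw [Matrix.transpose_smul, hsym]
    · show (n⁻¹ • M).trace = 1
      have : M.trace = n := by simpa [Matrix.trace, Matrix.diag] using htrM
      rw [Matrix.trace_smul, this, smul_eq_mul]
      field_simp
    · simp [Matrix.smul_apply, hedge a b hab]
    · simp [Matrix.smul_apply, Finset.mul_sum]
  have h3 : n⁻¹ * (∑ a, ∑ b, M a b) ≤ lovaszTheta G := le_csSup hbdd hmem
  have h4 : (∑ a, v a) ^ 2 ≤ n * lovaszTheta G := by
    have : ∑ a, ∑ b, M a b ≤ n * lovaszTheta G := by
      have := mul_le_mul_of_nonneg_left h3 hn0.le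
      calc ∑ a, ∑ b, M a b = n * (n⁻¹ * (∑ a, ∑ b, M a b)) := by field_simp
        _ ≤ n * lovaszTheta G := this
    linarith
  have habs : |∑ a, v a| ≤ Real.sqrt (n * lovaszTheta G) := Real.abs_le_sqrt h4
  rw [← Real.sqrt_mul hn0.le]
  calc -(Real.sqrt (n * lovaszTheta G)) ≤ -|∑ a, v a| := neg_le_neg habs
    _ ≤ ∑ a, v a := neg_abs_le _
end Main
section Final
open Matrix
variable {V : Type*} [Fintype V] [DecidableEq V] [Nonempty V]

lemma theta_set_bddAbove (G : SimpleGraph V) :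
    BddAbove {x : ℝ | ∃ M' : Matrix V V ℝ,
      ThetaFeasible G M' ∧ x = ∑ a, ∑ b, M' a b} := by
  refine ⟨(Fintype.card V : ℝ), fun x hx => ?_⟩
  obtain ⟨M', ⟨hsym, hpsd, htr, -⟩, rfl⟩ := hx
  have htrM : ∑ a, M' a a = 1 := by simpa [Matrix.trace, Matrix.diag] using htr
  have hb : ∀ a b : V, M' a b ≤ (M' a a + M' b b) / 2 := by
    intro a b
    have := psd_entry_bound hpsd hsym a b
    linarith
  calc ∑ a, ∑ b, M' a b ≤ ∑ a, ∑ b, (M' a a + M' b b) / 2 :=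
        Finset.sum_le_sum fun a _ => Finset.sum_le_sum fun b _ => hb a b
    _ = (Fintype.card V : ℝ) := by
      have inner : ∀ a : V, ∑ b, (M' a a + M' b b) / 2
          = ((Fintype.card V : ℝ) * M' a a + 1) / 2 := by
        intro a
        rw [← Finset.sum_div, Finset.sum_add_distrib, htrM, Finset.sum_const,
          Finset.card_univ, nsmul_eq_mul]
      rw [Finset.sum_congr rfl fun a _ => inner a, ← Finset.sum_div,
        Finset.sum_add_distrib, ← Finset.mul_sum, htrM, Finset.sum_const,
        Finset.card_univ, nsmul_eq_mul, mul_one]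
      ring

lemma one_mem_theta_set (G : SimpleGraph V) :
    (1 : ℝ) ∈ {x : ℝ | ∃ M' : Matrix V V ℝ,
      ThetaFeasible G M' ∧ x = ∑ a, ∑ b, M' a b} := by
  classical
  obtain ⟨a₀⟩ := (inferInstance : Nonempty V)
  have hd : (0 : V → ℝ) ≤ Pi.single a₀ 1 := by
    intro i
    rcases eq_or_ne i a₀ with h | h
    · subst h; simp
    · simp [Pi.single_eq_of_ne h]
  refine ⟨Matrix.diagonal (Pi.single a₀ 1), ⟨Matrix.isSymm_diagonal _,
    Matrix.PosSemidef.diagonal hd, ?_, fun a b hab => ?_⟩, ?_⟩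
  · rw [Matrix.trace_diagonal]
    simp
  · exact Matrix.diagonal_apply_ne _ hab.ne
  · simp [Matrix.diagonal_apply]

theorem stmt1' {V : Type*} [Fintype V] [DecidableEq V] [Nonempty V]
    (G : SimpleGraph V) (hG : VertexTransitive G)
    (J₀ : V → ℝ) (hJ₀ : ∀ a, J₀ a = 1 / Real.sqrt (Fintype.card V)) :
    sInf {x : ℝ | ∃ (v : V → ℝ) (M : Matrix V V ℝ),
        HFeasible G v M ∧ x = ∑ a, J₀ a * v a}
      = - Real.sqrt (lovaszTheta G) := by
  classical
  set n : ℝ := (Fintype.card V : ℝ) with hn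
  have hn0 : 0 < n := by simp only [hn]; exact_mod_cast Fintype.card_pos
  have hsn : 0 < Real.sqrt n := Real.sqrt_pos.mpr hn0
  set Θ := {x : ℝ | ∃ M' : Matrix V V ℝ,
      ThetaFeasible G M' ∧ x = ∑ a, ∑ b, M' a b} with hΘ
  have hbdd : BddAbove Θ := theta_set_bddAbove G
  have hone : (1 : ℝ) ∈ Θ := one_mem_theta_set G
  have hθdef : lovaszTheta G = sSup Θ := rfl
  have hθ1 : (1 : ℝ) ≤ lovaszTheta G := le_csSup hbdd hone
  have hθ0 : (0 : ℝ) ≤ lovaszTheta G := by linarith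
  set H := {x : ℝ | ∃ (v : V → ℝ) (M : Matrix V V ℝ),
      HFeasible G v M ∧ x = ∑ a, J₀ a * v a} with hH
  -- every value in Θ gives an element of H with value -√S
  have hcons : ∀ S ∈ Θ, (-Real.sqrt S) ∈ H := by
    intro S hS
    obtain ⟨M', hM', hSeq⟩ := hS
    obtain ⟨v, M, hfeas, hv⟩ := construction G hG hM' hSeq
    refine ⟨v, M, hfeas, ?_⟩
    have : ∑ a, J₀ a * v a = ∑ _a : V, (1 / Real.sqrt n) * (-Real.sqrt (S / n)) := by
      refine Finset.sum_congr rfl fun a _ => ?_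
      rw [hJ₀ a, hv a, ← hn]
    rw [this, Finset.sum_const, Finset.card_univ, nsmul_eq_mul, ← hn]
    have hS0 : 0 ≤ S := by
      obtain ⟨hsym', hpsd', -, -⟩ := hM'
      rw [hSeq]; exact sum_sum_nonneg_of_psd hpsd'
    rw [Real.sqrt_div hS0]
    have hnn : Real.sqrt n * Real.sqrt n = n := Real.mul_self_sqrt hn0.le
    field_simp
    rw [Real.sq_sqrt hn0.le]
  have hHne : H.Nonempty := ⟨-Real.sqrt 1, hcons 1 hone⟩
  -- lower bound on H
  have hlb : ∀ x ∈ H, -Real.sqrt (lovaszTheta G) ≤ x := by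
    intro x hx
    obtain ⟨v, M, hfeas, rfl⟩ := hx
    have hlow := hfeasible_lower G hbdd hfeas
    have hval : ∑ a, J₀ a * v a = (1 / Real.sqrt n) * ∑ a, v a := by
      rw [Finset.mul_sum]
      exact Finset.sum_congr rfl fun a _ => by rw [hJ₀ a]
    rw [hval]
    have h5 : (1 / Real.sqrt n) * (-(Real.sqrt n * Real.sqrt (lovaszTheta G)))
        ≤ (1 / Real.sqrt n) * ∑ a, v a :=
      mul_le_mul_of_nonneg_left hlow (by positivity)
    have h8 : (1 / Real.sqrt n) * (-(Real.sqrt n * Real.sqrt (lovaszTheta G)))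
        = -Real.sqrt (lovaszTheta G) := by
      field_simp
    rw [← h8]
    exact h5
  have hbddb : BddBelow H := ⟨-Real.sqrt (lovaszTheta G), hlb⟩
  refine le_antisymm ?_ (le_csInf hHne hlb)
  -- upper bound: sInf H ≤ -√θ
  have hIle : ∀ S ∈ Θ, sInf H ≤ -Real.sqrt S := fun S hS => csInf_le hbddb (hcons S hS)
  have hI1 : sInf H ≤ -1 := by simpa [Real.sqrt_one] using hIle 1 hone
  have hIsq : lovaszTheta G ≤ (sInf H) ^ 2 := by
    rw [hθdef]
    refine csSup_le ⟨1, hone⟩ fun S hS => ?_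
    have h6 : Real.sqrt S ≤ -(sInf H) := by
      have := hIle S hS
      linarith
    have hS0 : 0 ≤ S := by
      obtain ⟨M', ⟨-, hpsd', -, -⟩, rfl⟩ := hS
      exact sum_sum_nonneg_of_psd hpsd'
    nlinarith [Real.sq_sqrt hS0, Real.sqrt_nonneg S]
  have h7 : Real.sqrt (lovaszTheta G) ≤ -(sInf H) := by
    have := Real.sqrt_le_sqrt hIsq
    rwa [Real.sqrt_sq_eq_abs, abs_of_nonpos (by linarith)] at this
  linarith
end Final
theorem stmt1 {V : Type*} [Fintype V] [DecidableEq V] [Nonempty V]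
    (G : SimpleGraph V) (hG : VertexTransitive G)
    (J₀ : V → ℝ) (hJ₀ : ∀ a, J₀ a = 1 / Real.sqrt (Fintype.card V)) :
    sInf {x : ℝ | ∃ (v : V → ℝ) (M : Matrix V V ℝ),
        HFeasible G v M ∧ x = ∑ a, J₀ a * v a}
      = - Real.sqrt (lovaszTheta G) :=
  stmt1' G hG J₀ hJ₀
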